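/- Let N be a prime and let p, q > 1 be natural numbers with q ∣ p or p ∣ q. Then for every k with 1 ≤ k ≤ N−1, the exponential sum S_k^{(p)} = Σ_{x=0}^{N−1} exp(2πi·k·x^p/N) satisfies |S_k^{(p)}|² ≤ 2·N·p². -/

import Mathlib

open Complex Real Finset

noncomputable def Sfun (N p : ℕ) [NeZero N] (a : ZMod N) : ℂ :=
  ∑ x : ZMod N, ZMod.stdAddChar (a * x ^ p)

lemma conj_stdAddChar {N : ℕ} [NeZero N] (a : ZMod N) :
    (starRingEnd ℂ) (ZMod.stdAddChar a) = ZMod.stdAddChar (-a) := by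
  rw [ZMod.stdAddChar_apply, ZMod.stdAddChar_apply, AddChar.map_neg_eq_inv,
    ← Circle.coe_inv_eq_conj]

lemma aux_card_pow (N : ℕ) [Fact N.Prime] (p : ℕ) (hp : 0 < p) (c : ZMod N) :
    (Finset.univ.filter (fun x : ZMod N => x ^ p = c)).card ≤ p := by
  classical
  calc (Finset.univ.filter (fun x : ZMod N => x ^ p = c)).card
      ≤ (Polynomial.nthRoots p c).toFinset.card := by
        apply Finset.card_le_card
        intro x hx
        simp only [Finset.mem_filter, Finset.mem_univ, true_and] at hx
        simp [Multiset.mem_toFinset, Polynomial.mem_nthRoots hp, hx]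
    _ ≤ Multiset.card (Polynomial.nthRoots p c) := Multiset.toFinset_card_le _
    _ ≤ p := Polynomial.card_nthRoots p c

lemma Sfun_shift (N : ℕ) [Fact N.Prime] (p : ℕ) (a t : ZMod N) (ht : t ≠ 0) :
    Sfun N p (a * t ^ p) = Sfun N p a := by
  refine Fintype.sum_bijective (fun x : ZMod N => t * x) (mulLeft_bijective₀ t ht) _ _
    fun x => ?_
  congr 1
  rw [mul_pow]
  ring

lemma parseval (N : ℕ) [NeZero N] (hN : N.Prime) (p : ℕ) :
    ∑ a : ZMod N, Complex.normSq (Sfun N p a) =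
      (N : ℝ) * ((Finset.univ.filter
        (fun xy : ZMod N × ZMod N => xy.1 ^ p = xy.2 ^ p)).card) := by
  haveI := Fact.mk hN
  classical
  have key : ∀ a : ZMod N, (Complex.normSq (Sfun N p a) : ℂ)
      = ∑ x : ZMod N, ∑ y : ZMod N, ZMod.stdAddChar (a * (x ^ p - y ^ p)) := by
    intro a
    rw [← Complex.mul_conj, Sfun, map_sum, Finset.sum_mul_sum]
    refine Finset.sum_congr rfl fun x _ => Finset.sum_congr rfl fun y _ => ?_
    rw [conj_stdAddChar, ← AddChar.map_add_eq_mul]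
    congr 1
    ring
  have main : ∑ a : ZMod N, (Complex.normSq (Sfun N p a) : ℂ)
      = (N : ℂ) * ((Finset.univ.filter
        (fun xy : ZMod N × ZMod N => xy.1 ^ p = xy.2 ^ p)).card) := by
    calc ∑ a : ZMod N, (Complex.normSq (Sfun N p a) : ℂ)
        = ∑ a : ZMod N, ∑ x : ZMod N, ∑ y : ZMod N,
            ZMod.stdAddChar (a * (x ^ p - y ^ p)) := by
          exact Finset.sum_congr rfl fun a _ => key a
      _ = ∑ x : ZMod N, ∑ y : ZMod N, ∑ a : ZMod N,
            ZMod.stdAddChar (a * (x ^ p - y ^ p)) := by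
          rw [Finset.sum_comm]
          exact Finset.sum_congr rfl fun x _ => Finset.sum_comm
      _ = ∑ x : ZMod N, ∑ y : ZMod N,
            (if x ^ p - y ^ p = 0 then (Fintype.card (ZMod N) : ℂ) else 0) := by
          refine Finset.sum_congr rfl fun x _ => Finset.sum_congr rfl fun y _ => ?_
          rw [AddChar.sum_mulShift _ (ZMod.isPrimitive_stdAddChar N)]
          split <;> simp
      _ = ∑ xy : ZMod N × ZMod N,
            (if xy.1 ^ p = xy.2 ^ p then (N : ℂ) else 0) := by
          rw [← Finset.sum_product']
          refine Finset.sum_congr rfl fun xy _ => ?_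
          rw [ZMod.card]
          simp [sub_eq_zero]
      _ = (N : ℂ) * ((Finset.univ.filter
            (fun xy : ZMod N × ZMod N => xy.1 ^ p = xy.2 ^ p)).card) := by
          rw [← Finset.sum_filter, Finset.sum_const, nsmul_eq_mul]
          ring
  exact_mod_cast main

lemma count_le (N : ℕ) [Fact N.Prime] (p : ℕ) (hp : 0 < p) :
    (Finset.univ.filter
      (fun xy : ZMod N × ZMod N => xy.1 ^ p = xy.2 ^ p)).card ≤ p * N := by
  classical
  have h := Finset.card_le_mul_card_image_of_maps_to
    (f := fun xy : ZMod N × ZMod N => xy.2)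
    (s := Finset.univ.filter (fun xy : ZMod N × ZMod N => xy.1 ^ p = xy.2 ^ p))
    (t := Finset.univ) (fun a _ => Finset.mem_univ _) p ?_
  · simpa [Finset.card_univ, ZMod.card] using h
  · intro y _
    refine le_trans ?_ (aux_card_pow N p hp (y ^ p))
    apply Finset.card_le_card_of_injOn (fun z => z.1)
    · intro z hz
      simp only [Finset.mem_coe, Finset.mem_filter, Finset.mem_univ, true_and] at hz ⊢
      rw [← hz.2]; exact hz.1
    · intro a ha b hb hab
      simp only [Finset.mem_coe, Finset.mem_filter, Finset.mem_univ, true_and] at ha hb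
      exact Prod.ext hab (ha.2.trans hb.2.symm)

theorem stmt_8 (N : ℕ) (hN : N.Prime) (p q : ℕ) (hp : 1 < p) (hq : 1 < q)
    (hdvd : q ∣ p ∨ p ∣ q) (k : ℕ) (hk1 : 1 ≤ k) (hk2 : k ≤ N - 1) :
    ‖(∑ x ∈ Finset.range N, Complex.exp (2 * Real.pi * Complex.I * k * (x ^ p) / N))‖ ^ 2 ≤
      2 * N * p ^ 2 := by
  haveI := Fact.mk hN
  haveI : NeZero N := ⟨hN.pos.ne'⟩
  classical
  have hp0 : 0 < p := by omega
  have hN2 : 2 ≤ N := hN.two_le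
  set K : ZMod N := (k : ZMod N) with hKdef
  have hKne : K ≠ 0 := by
    simp only [hKdef, Ne, ZMod.natCast_eq_zero_iff]
    intro h
    have := Nat.le_of_dvd (by omega) h
    omega
  have hsum : (∑ x ∈ Finset.range N,
      Complex.exp (2 * Real.pi * Complex.I * k * (x ^ p) / N)) = Sfun N p K := by
    rw [Sfun]
    refine Finset.sum_nbij' (fun x : ℕ => (x : ZMod N)) (fun a : ZMod N => a.val)
      (fun a _ => Finset.mem_univ _) (fun a _ => Finset.mem_range.mpr (ZMod.val_lt a))
      (fun a ha => ?_) (fun a _ => ZMod.natCast_zmod_val a) (fun x hx => ?_)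
    · exact ZMod.val_natCast_of_lt (Finset.mem_range.mp ha)
    · have h1 : K * (x : ZMod N) ^ p = (((k * x ^ p : ℕ) : ℤ) : ZMod N) := by
        push_cast; ring
      rw [h1, ZMod.stdAddChar_coe]
      congr 1
      push_cast
      ring
  rw [hsum, Complex.sq_norm]
  set T := Finset.univ.filter (fun xy : ZMod N × ZMod N => xy.1 ^ p = xy.2 ^ p) with hT
  have hTcard : T.card ≤ p * N := count_le N p hp0
  set O := (Finset.univ.erase (0 : ZMod N)).image (fun t => K * t ^ p) with hO
  have hOsub : O ⊆ Finset.univ.erase 0 := by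
    intro a ha
    simp only [hO, Finset.mem_image, Finset.mem_erase, Finset.mem_univ, and_true] at ha ⊢
    obtain ⟨t, ht, rfl⟩ := ha
    exact mul_ne_zero hKne (pow_ne_zero _ ht)
  have hfib : (N - 1 : ℕ) ≤ p * O.card := by
    have h := Finset.card_le_mul_card_image (f := fun t : ZMod N => K * t ^ p)
      (Finset.univ.erase 0) p ?_
    · calc N - 1 = (Finset.univ.erase (0 : ZMod N)).card := by
            rw [Finset.card_erase_of_mem (Finset.mem_univ _), Finset.card_univ, ZMod.card]
        _ ≤ p * O.card := h
    · intro b _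
      refine le_trans (Finset.card_le_card ?_) (aux_card_pow N p hp0 (K⁻¹ * b))
      intro t ht
      simp only [Finset.mem_filter, Finset.mem_erase, Finset.mem_univ, true_and,
        and_true] at ht ⊢
      rw [← ht.2]
      field_simp
  have hval : ∀ a ∈ O, Complex.normSq (Sfun N p a) = Complex.normSq (Sfun N p K) := by
    intro a ha
    simp only [hO, Finset.mem_image, Finset.mem_erase, Finset.mem_univ, and_true] at ha
    obtain ⟨t, ht, rfl⟩ := ha
    rw [Sfun_shift N p K t ht]
  have hS0 : Sfun N p 0 = (N : ℂ) := by
    simp [Sfun, Finset.card_univ, ZMod.card]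
  have hsum_bound : (O.card : ℝ) * Complex.normSq (Sfun N p K)
      ≤ (N : ℝ) * ((N : ℝ) * p) - (N : ℝ) * (N : ℝ) := by
    have e1 : ∑ a ∈ O, Complex.normSq (Sfun N p a)
        = (O.card : ℝ) * Complex.normSq (Sfun N p K) := by
      rw [Finset.sum_congr rfl hval, Finset.sum_const, nsmul_eq_mul]
    have e2 : ∑ a ∈ O, Complex.normSq (Sfun N p a)
        ≤ ∑ a ∈ Finset.univ.erase (0 : ZMod N), Complex.normSq (Sfun N p a) :=
      Finset.sum_le_sum_of_subset_of_nonneg hOsub (fun _ _ _ => Complex.normSq_nonneg _)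
    have e3 : Complex.normSq (Sfun N p 0)
          + ∑ a ∈ Finset.univ.erase (0 : ZMod N), Complex.normSq (Sfun N p a)
        = ∑ a : ZMod N, Complex.normSq (Sfun N p a) :=
      Finset.add_sum_erase _ (fun a => Complex.normSq (Sfun N p a)) (Finset.mem_univ (0 : ZMod N))
    have e4 : (∑ a : ZMod N, Complex.normSq (Sfun N p a)) ≤ (N : ℝ) * ((p : ℝ) * N) := by
      rw [parseval N hN p, ← hT]
      have h5 : (T.card : ℝ) ≤ (p : ℝ) * N := by exact_mod_cast hTcard
      exact mul_le_mul_of_nonneg_left h5 (by positivity)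
    have e5 : Complex.normSq (Sfun N p 0) = (N : ℝ) * (N : ℝ) := by
      rw [hS0]
      simp [Complex.normSq_apply]
    nlinarith [e1, e2, e3, e4, e5]
  set x := Complex.normSq (Sfun N p K) with hx
  have hx0 : 0 ≤ x := Complex.normSq_nonneg _
  have hN2' : (2 : ℝ) ≤ N := by exact_mod_cast hN2
  have hp2 : (2 : ℝ) ≤ p := by exact_mod_cast hp
  have hf1 : ((N : ℝ) - 1) ≤ (p : ℝ) * O.card := by
    have h := (Nat.cast_le (α := ℝ)).mpr hfib
    rw [Nat.cast_sub hN.one_le] at h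
    push_cast at h ⊢
    linarith
  have h4 : x * ((N : ℝ) - 1) ≤ x * ((p : ℝ) * O.card) :=
    mul_le_mul_of_nonneg_left hf1 hx0
  have h6 : (p : ℝ) * ((O.card : ℝ) * x)
      ≤ (p : ℝ) * ((N : ℝ) * ((N : ℝ) * p) - (N : ℝ) * (N : ℝ)) :=
    mul_le_mul_of_nonneg_left hsum_bound (by positivity)
  have hNpos : (0 : ℝ) < (N : ℝ) - 1 := by linarith
  have h5 : x * ((p : ℝ) * O.card) = (p : ℝ) * ((O.card : ℝ) * x) := by ring
  have h8 : x * ((N : ℝ) - 1) ≤ (p : ℝ) * ((N : ℝ) * ((N : ℝ) * p) - (N : ℝ) * (N : ℝ)) := by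
    linarith
  have hint : (0 : ℝ) ≤ (N : ℝ) * (p : ℝ) * ((p : ℝ) * ((N : ℝ) - 2) + (N : ℝ)) := by
    have : (0 : ℝ) ≤ (p : ℝ) * ((N : ℝ) - 2) + (N : ℝ) := by nlinarith
    positivity
  have h7 : x * ((N : ℝ) - 1) ≤ 2 * N * (p : ℝ) ^ 2 * ((N : ℝ) - 1) := by
    nlinarith [h8, hint]
  exact le_of_mul_le_mul_right h7 hNpos
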